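/- arXiv:2009.06236 — 2 statements merged into one kernel-verified Lean document; each statement's English description precedes it below -/
import Mathlib

section
/- Let A ∈ ℝ^{n×n} have a simple eigenvalue 1 with eigenvector ξ, C ∈ ℝ^{1×n} with rank([A − I; C]) = n, B ∈ ℝ^{n×p}, and suppose the (n+1)×(n+p) matrix [[A − I, B],[C, 0]] has full row rank n+1. Let S = [[1,h],[0,1]], Q = [Q¹, Q²] ∈ ℝ^{1×2} with Q¹ ≠ 0. Then there exist Π = [Π¹, Π²] ∈ ℝ^{n×2} with Π ≠ 0 and Γ = [Γ¹, Γ²] ∈ ℝ^{p×2} with Γ¹ = 0 such that A·Π − Π·S = −B·Γ and C·Π = Q. -/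
open Matrix

theorem regulator_solution_with_zero_first_column (n p : ℕ) (h : ℝ) (hh : 0 < h)
    (A : Matrix (Fin n) (Fin n) ℝ) (B : Matrix (Fin n) (Fin p) ℝ)
    (C : Matrix (Fin 1) (Fin n) ℝ)
    (ξ : Fin n → ℝ) (hξ : ξ ≠ 0) (heig : A *ᵥ ξ = ξ)
    (hPBH : (Matrix.fromRows (A - 1) C).rank = n)
    (hfull : (Matrix.fromBlocks (A - 1) B C 0).rank = n + 1)
    (S : Matrix (Fin 2) (Fin 2) ℝ) (hS : S = !![1, h; 0, 1])
    (Q : Matrix (Fin 1) (Fin 2) ℝ) (hQ : Q 0 0 ≠ 0) :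
    ∃ (Pmat : Matrix (Fin n) (Fin 2) ℝ) (Γ : Matrix (Fin p) (Fin 2) ℝ),
      Pmat ≠ 0 ∧ (∀ i, Γ i 0 = 0) ∧ A * Pmat - Pmat * S = -(B * Γ) ∧ C * Pmat = Q := by
  classical
  set N := Matrix.fromRows (A - 1) C with hN
  set M := Matrix.fromBlocks (A - 1) B C (0 : Matrix (Fin 1) (Fin p) ℝ) with hM
  -- N is injective as a linear map
  have hNinj : Function.Injective N.mulVecLin := by
    have hrn : Module.finrank ℝ (LinearMap.range N.mulVecLin)
        + Module.finrank ℝ (LinearMap.ker N.mulVecLin) = n := by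
      have := LinearMap.finrank_range_add_finrank_ker N.mulVecLin
      simpa using this
    have hrank : Module.finrank ℝ (LinearMap.range N.mulVecLin) = n := hPBH
    have hker : Module.finrank ℝ (LinearMap.ker N.mulVecLin) = 0 := by omega
    exact LinearMap.ker_eq_bot.mp (Submodule.finrank_eq_zero.mp hker)
  -- M is surjective
  have hMsurj : Function.Surjective M.mulVecLin := by
    rw [← LinearMap.range_eq_top]
    apply Submodule.eq_top_of_finrank_eq
    have hrank : Module.finrank ℝ (LinearMap.range M.mulVecLin) = n + 1 := hfull
    rw [hrank]
    simp [Module.finrank_pi]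
  -- C ξ ≠ 0
  have hAmI : (A - 1) *ᵥ ξ = 0 := by
    rw [Matrix.sub_mulVec, heig, Matrix.one_mulVec, sub_self]
  have hCξ : (C *ᵥ ξ) 0 ≠ 0 := by
    intro hc
    apply hξ
    apply hNinj
    have : N.mulVecLin ξ = 0 := by
      rw [Matrix.mulVecLin_apply, hN, Matrix.fromRows_mulVec, hAmI]
      funext i
      cases i with
      | inl i => simp
      | inr i => simp [show (C *ᵥ ξ) i = 0 by fin_cases i; exact hc]
    simpa using this
  set d : ℝ := (C *ᵥ ξ) 0 with hd
  set c : ℝ := Q 0 0 / d with hc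
  have hc0 : c ≠ 0 := div_ne_zero hQ hCξ
  set π1 : Fin n → ℝ := c • ξ with hπ1
  -- solve the second column
  obtain ⟨v, hv⟩ := hMsurj (Sum.elim (h • π1) (fun _ => Q 0 1))
  set π2 : Fin n → ℝ := v ∘ Sum.inl with hπ2
  set γ2 : Fin p → ℝ := v ∘ Sum.inr with hγ2
  have hvelim : v = Sum.elim π2 γ2 := by
    funext i; cases i <;> rfl
  rw [Matrix.mulVecLin_apply, hvelim, hM, Matrix.fromBlocks_mulVec] at hv
  have hv1 : (A - 1) *ᵥ π2 + B *ᵥ γ2 = h • π1 := by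
    funext i
    have := congrFun hv (Sum.inl i)
    simpa using this
  have hv2 : C *ᵥ π2 = fun _ => Q 0 1 := by
    funext i
    have := congrFun hv (Sum.inr i)
    simpa using this
  refine ⟨Matrix.of fun i j => if j = 0 then π1 i else π2 i,
    Matrix.of fun i j => if j = 0 then 0 else γ2 i, ?_, ?_, ?_, ?_⟩
  · -- Pmat ≠ 0
    intro h0
    obtain ⟨i, hi⟩ := Function.ne_iff.mp hξ
    have := congrFun (congrFun h0 i) 0
    simp [hπ1] at this
    rcases this with h' | h'
    · exact hc0 h'
    · exact hi (by simpa using h')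
  · intro i; simp
  · -- the Sylvester equation
    have hA2 : A *ᵥ π1 = π1 := by
      rw [hπ1, Matrix.mulVec_smul, heig]
    ext i j
    fin_cases j
    · have h1 : (A *ᵥ π1) i = π1 i := congrFun hA2 i
      simp [Matrix.mul_apply, Matrix.sub_apply, Matrix.neg_apply, hS,
        Fin.sum_univ_two, Matrix.mulVec, dotProduct] at h1 ⊢
      linarith
    · have h2 := congrFun hv1 i
      simp [Matrix.sub_mulVec, Matrix.one_mulVec, Matrix.mulVec, dotProduct,
        Pi.add_apply, Pi.sub_apply] at h2
      simp [Matrix.mul_apply, Matrix.sub_apply, Matrix.neg_apply, hS,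
        Fin.sum_univ_two, Matrix.mulVec, dotProduct]
      linarith
  · -- C Pmat = Q
    ext i j
    fin_cases i
    fin_cases j
    · have : (C *ᵥ π1) 0 = Q 0 0 := by
        rw [hπ1, Matrix.mulVec_smul]
        simp [hc, ← hd, div_mul_cancel₀ _ hCξ]
      simpa [Matrix.mul_apply, Matrix.mulVec, dotProduct] using this
    · have := congrFun hv2 0
      simpa [Matrix.mul_apply, Matrix.mulVec, dotProduct] using this
end

section
/- Let Õ∞ = {(x̃, ω²) : H̃_x x̃ + H̃_w ω² ≤ 1} be invariant for the dynamics x̃⁺ = (A+BK)x̃, (ω²)⁺ = ω², i.e., (x̃, ω²) ∈ Õ∞ implies ((A+BK)x̃, ω²) ∈ Õ∞. Define 𝒪∞ = {(x,ω) : H̃_x(x − Πω) + H̃_w ω² ≤ 1} with Π satisfying AΠ − ΠS = −BΓ, L = Γ − KΠ. Then (x,ω) ∈ 𝒪∞ implies ((A+BK)x + BLω, Sω) ∈ 𝒪∞. -/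
open Matrix

theorem Oinf_invariance (n p ℓ : ℕ) (h : ℝ) (hh : 0 < h)
    (A : Matrix (Fin n) (Fin n) ℝ) (B : Matrix (Fin n) (Fin p) ℝ)
    (K : Matrix (Fin p) (Fin n) ℝ) (Pmat : Matrix (Fin n) (Fin 2) ℝ)
    (Γ : Matrix (Fin p) (Fin 2) ℝ)
    (S : Matrix (Fin 2) (Fin 2) ℝ) (hS : S = !![1, h; 0, 1])
    (L : Matrix (Fin p) (Fin 2) ℝ)
    (hreg : A * Pmat - Pmat * S = -(B * Γ)) (hL : L = Γ - K * Pmat)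
    (Htx : Matrix (Fin ℓ) (Fin n) ℝ) (Htw : Fin ℓ → ℝ)
    (hinv : ∀ (xt : Fin n → ℝ) (w2 : ℝ),
      (∀ i, (Htx *ᵥ xt) i + Htw i * w2 ≤ 1) →
      (∀ i, (Htx *ᵥ ((A + B * K) *ᵥ xt)) i + Htw i * w2 ≤ 1)) :
    ∀ (x : Fin n → ℝ) (ω : Fin 2 → ℝ),
      (∀ i, (Htx *ᵥ (x - Pmat *ᵥ ω)) i + Htw i * ω 1 ≤ 1) →
      (∀ i, (Htx *ᵥ (((A + B * K) *ᵥ x + (B * L) *ᵥ ω) - Pmat *ᵥ (S *ᵥ ω))) i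
          + Htw i * (S *ᵥ ω) 1 ≤ 1) := by
  intro x ω hx
  have h1 : (S *ᵥ ω) 1 = ω 1 := by
    simp [hS, mulVec, dotProduct, Fin.sum_univ_two]
  have hA : A * Pmat = -(B * Γ) + Pmat * S := sub_eq_iff_eq_add.mp hreg
  have key : (A + B * K) * Pmat + B * L = Pmat * S := by
    calc (A + B * K) * Pmat + B * L
        = A * Pmat + (B * K) * Pmat + (B * Γ - B * (K * Pmat)) := by
          rw [hL, Matrix.mul_sub, Matrix.add_mul]
      _ = A * Pmat + B * Γ := by rw [Matrix.mul_assoc]; abel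
      _ = Pmat * S := by rw [hA]; abel
  have h2 : ((A + B * K) *ᵥ x + (B * L) *ᵥ ω) - Pmat *ᵥ (S *ᵥ ω)
      = (A + B * K) *ᵥ (x - Pmat *ᵥ ω) := by
    rw [mulVec_mulVec, ← key]
    simp only [add_mulVec, mulVec_sub, mulVec_mulVec, mulVec_add]
    abel
  intro i
  rw [h2, h1]
  exact hinv _ _ hx i
end
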